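/- arXiv:1010.4627 — 3 statements merged into one kernel-verified Lean document; each statement's English description precedes it below -/
import Mathlib

section
/- Assume V ∈ RH_q with q > n/2 and let W^ℒ be the heat semigroup generated by −ℒ = Δ − V, with kernel satisfying |∂_t W^ℒ_t(x,y)| ≤ C t^{-1-n/2} e^{-c|x-y|²/t} (1 + t/γ(x)²)^{-1} (1 + |x-y|/√t)^{-1-n}. Then for f ∈ BMO^ℒ(ℝⁿ) and any x with t ≥ γ(x_k)² where γ(x) ∼ γ(x_k), the long-time derivative integral Ω(f)(x) = ∫_{γ(x_k)²}^∞ ∫_{ℝⁿ} |∂_t W^ℒ_t(x,y)| |f(y)| dy dt satisfies Ω(f)(x) ≤ C ‖f‖_{BMO^ℒ(ℝⁿ)}. -/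
open MeasureTheory Set
open scoped ENNReal

noncomputable section

/-- The average of `f` over a set `s` (with respect to Lebesgue measure). -/
def avgOn {n : ℕ} (f : EuclideanSpace ℝ (Fin n) → ℝ) (s : Set (EuclideanSpace ℝ (Fin n))) : ℝ :=
  ((volume s).toReal)⁻¹ * ∫ y in s, f y

/-- `f ∈ BMO^ℒ(ℝⁿ)` with norm at most `M`, relative to the critical radius function `γ`:
the mean oscillation of `f` over every ball is `≤ M`, and the mean of `|f|` over every
ball of radius `r ≥ γ(center)` is `≤ M`. -/
def IsBMOLWith {n : ℕ} (γ : EuclideanSpace ℝ (Fin n) → ℝ)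
    (f : EuclideanSpace ℝ (Fin n) → ℝ) (M : ℝ) : Prop :=
  (∀ (z : EuclideanSpace ℝ (Fin n)) (r : ℝ), 0 < r →
    ((volume (Metric.ball z r)).toReal)⁻¹ *
      ∫ y in Metric.ball z r, |f y - avgOn f (Metric.ball z r)| ≤ M) ∧
  (∀ (z : EuclideanSpace ℝ (Fin n)) (r : ℝ), γ z ≤ r →
    ((volume (Metric.ball z r)).toReal)⁻¹ * ∫ y in Metric.ball z r, |f y| ≤ M)

/-- Auxiliary numeric bound: the terms of the annulus decomposition are dominated by
a geometric series. -/
lemma aux_term_bound (n : ℕ) {c₀ : ℝ} (hc₀ : 0 < c₀) (j : ℕ) :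
    (if j = 0 then (1:ℝ) else Real.exp (-(c₀ * 4 ^ j))) * (2:ℝ) ^ ((j+1)*n) ≤
      ((2:ℝ)^n * (1 + (Nat.factorial (n+1)) / c₀^(n+1))) * (1/2) ^ j := by
  have hfac : (0:ℝ) < (Nat.factorial (n+1) : ℝ) := by exact_mod_cast Nat.factorial_pos _
  have hfc : (0:ℝ) ≤ (Nat.factorial (n+1) : ℝ) / c₀^(n+1) := by positivity
  rcases Nat.eq_zero_or_pos j with h0 | hpos
  · subst h0
    simp only [↓reduceIte, one_mul, pow_zero, mul_one, zero_add]
    nlinarith [pow_pos (zero_lt_two (α := ℝ)) n]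
  · rw [if_neg hpos.ne']
    have hu : (0:ℝ) < c₀ * 4 ^ j := by positivity
    set m := n + 1 with hm
    have hexp : Real.exp (-(c₀ * 4 ^ j)) ≤ (Nat.factorial m : ℝ) / (c₀ * 4 ^ j) ^ m := by
      have h1 : (c₀ * 4 ^ j) ^ m / (Nat.factorial m : ℝ) ≤ Real.exp (c₀ * 4 ^ j) :=
        Real.pow_div_factorial_le_exp _ hu.le m
      rw [div_le_iff₀ hfac] at h1
      rw [Real.exp_neg, le_div_iff₀ (pow_pos hu m), inv_mul_eq_div,
        div_le_iff₀ (Real.exp_pos _)]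
      linarith
    have h4 : ((4:ℝ) ^ j) ^ m = 2 ^ (2*(j*m)) := by
      rw [← pow_mul, show (4:ℝ) = 2^2 by norm_num, ← pow_mul]
    have hpow2 : (2:ℝ)^((j+1)*n) * 2^j ≤ 2^n * 2^(2*(j*m)) := by
      rw [← pow_add, ← pow_add]
      apply pow_le_pow_right₀ one_le_two
      have : (j+1)*n + j = j*n + n + j := by ring
      rw [this]
      have : n + 2*(j*m) = n + 2*(j*n) + 2*j := by rw [hm]; ring
      rw [this]
      have h1 : j*n ≤ 2*(j*n) := by omega
      omega
    calc Real.exp (-(c₀ * 4 ^ j)) * (2:ℝ) ^ ((j+1)*n)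
        ≤ ((Nat.factorial m : ℝ) / (c₀ * 4 ^ j) ^ m) * (2:ℝ) ^ ((j+1)*n) := by
          apply mul_le_mul_of_nonneg_right hexp (by positivity)
      _ = ((Nat.factorial m : ℝ) / c₀^m) * ((2:ℝ)^((j+1)*n) / 2^(2*(j*m))) := by
          rw [mul_pow, h4]; ring
      _ ≤ ((Nat.factorial m : ℝ) / c₀^m) * ((2:ℝ)^n / 2^j) := by
          apply mul_le_mul_of_nonneg_left _ (by positivity)
          rw [div_le_div_iff₀ (by positivity) (by positivity)]
          exact hpow2
      _ = ((2:ℝ)^n * ((Nat.factorial m : ℝ) / c₀^m)) * (1/2) ^ j := by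
          rw [one_div, inv_pow]; ring
      _ ≤ ((2:ℝ)^n * (1 + (Nat.factorial (n+1) : ℝ) / c₀^(n+1))) * (1/2) ^ j := by
          apply mul_le_mul_of_nonneg_right _ (by positivity)
          rw [hm]
          nlinarith [pow_pos (zero_lt_two (α := ℝ)) n]

set_option maxHeartbeats 2000000 in
/-- let `V ∈ RH_q`, `q > n/2`, with critical radius function `γ`, and
suppose the time derivative `K t x y = ∂_t W^ℒ_t(x,y)` of the heat kernel of
`ℒ = -Δ + V` satisfies
`|K t x y| ≤ C₀ t^{-1-n/2} e^{-c₀|x-y|²/t} (1+t/γ(x)²)⁻¹ (1+|x-y|/√t)^{-1-n}`.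
Then for `f ∈ BMO^ℒ(ℝⁿ)` with norm at most `M` and any `x` with `γ(x) ∼ γ(x_k)`
(comparability within a factor `2`),
`Ω(f)(x) = ∫_{γ(x_k)²}^∞ ∫_{ℝⁿ} |∂_t W^ℒ_t(x,y)| |f(y)| dy dt ≤ C M`. -/
theorem schrodinger_heat_longtime_estimate (n : ℕ) (hn : 1 ≤ n) (C₀ c₀ : ℝ)
    (hC₀ : 0 < C₀) (hc₀ : 0 < c₀) :
    ∃ C > 0, ∀ (γ : EuclideanSpace ℝ (Fin n) → ℝ)
      (K : ℝ → EuclideanSpace ℝ (Fin n) → EuclideanSpace ℝ (Fin n) → ℝ)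
      (f : EuclideanSpace ℝ (Fin n) → ℝ) (M γk : ℝ)
      (x : EuclideanSpace ℝ (Fin n)),
      (∀ z, 0 < γ z) → 0 ≤ M → LocallyIntegrable f volume → IsBMOLWith γ f M →
      (∀ t, 0 < t → ∀ x' y : EuclideanSpace ℝ (Fin n),
        |K t x' y| ≤ C₀ * t ^ (-1 - (n : ℝ) / 2) * Real.exp (-c₀ * ‖x' - y‖ ^ 2 / t) *
          (1 + t / (γ x') ^ 2)⁻¹ * (1 + ‖x' - y‖ / Real.sqrt t) ^ (-1 - (n : ℝ))) →
      0 < γk → γk / 2 ≤ γ x → γ x ≤ 2 * γk →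
      ∫⁻ t in Ioi (γk ^ 2), ∫⁻ y, ENNReal.ofReal (|K t x y| * |f y|)
        ≤ ENNReal.ofReal (C * M) := by
  classical
  haveI : Nonempty (Fin n) := ⟨⟨0, hn⟩⟩
  have hκpos : (0:ℝ) <
      (volume (Metric.ball (0 : EuclideanSpace ℝ (Fin n)) 1)).toReal :=
    ENNReal.toReal_pos (Metric.measure_ball_pos volume 0 one_pos).ne' measure_ball_lt_top.ne
  set κ : ℝ := (volume (Metric.ball (0 : EuclideanSpace ℝ (Fin n)) 1)).toReal with hκdef
  set A : ℝ := (2:ℝ)^n * (1 + (Nat.factorial (n+1)) / c₀^(n+1)) with hAdef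
  have hApos : 0 < A := by
    have hfc : (0:ℝ) ≤ (Nat.factorial (n+1) : ℝ) / c₀^(n+1) := by positivity
    have := pow_pos (zero_lt_two (α := ℝ)) n
    nlinarith
  set S : ℝ := 2 * A with hSdef
  have hSpos : 0 < S := by positivity
  refine ⟨4 * C₀ * κ * S,
    mul_pos (mul_pos (mul_pos four_pos hC₀) hκpos) hSpos, ?_⟩
  intro γ K f M γk x hγ hM hf hBMO hK hγk hlow hupp
  have hγx : 0 < γ x := hγ x
  have hT : 0 < γk ^ 2 := pow_pos hγk 2
  -- integral of |f| over large balls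
  have hball : ∀ ρ : ℝ, γ x ≤ ρ →
      ∫⁻ y in Metric.ball x ρ, ENNReal.ofReal |f y| ≤ ENNReal.ofReal (M * (ρ^n * κ)) := by
    intro ρ hρ
    have hρ0 : 0 < ρ := lt_of_lt_of_le hγx hρ
    have hint : IntegrableOn f (Metric.ball x ρ) volume :=
      (hf.integrableOn_isCompact (isCompact_closedBall x ρ)).mono_set
        Metric.ball_subset_closedBall
    have heq : ∫⁻ y in Metric.ball x ρ, ENNReal.ofReal |f y|
        = ENNReal.ofReal (∫ y in Metric.ball x ρ, |f y|) :=
      (ofReal_integral_eq_lintegral_ofReal hint.abs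
        (Filter.Eventually.of_forall fun y => abs_nonneg _)).symm
    rw [heq]
    apply ENNReal.ofReal_le_ofReal
    have hvol : (volume (Metric.ball x ρ)).toReal = ρ^n * κ := by
      rw [Measure.addHaar_ball volume x hρ0.le, ENNReal.toReal_mul,
        ENNReal.toReal_ofReal (by positivity), finrank_euclideanSpace_fin]
    have hvolpos : 0 < (volume (Metric.ball x ρ)).toReal := by
      rw [hvol]; positivity
    have hBMO2 := hBMO.2 x ρ hρ
    calc ∫ y in Metric.ball x ρ, |f y|
        ≤ (volume (Metric.ball x ρ)).toReal * M := (inv_mul_le_iff₀ hvolpos).1 hBMO2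
      _ = M * (ρ^n * κ) := by rw [hvol]; ring
  -- the inner estimate for each fixed t
  have hstep1 : ∀ t ∈ Ioi (γk^2),
      ∫⁻ y, ENNReal.ofReal (|K t x y| * |f y|)
        ≤ ENNReal.ofReal ((C₀ * (γ x)^2 * M * κ * S) * t ^ (-2:ℝ)) := by
    intro t ht
    simp only [mem_Ioi] at ht
    have ht0 : 0 < t := hT.trans ht
    set r := Real.sqrt t with hrdef
    have hr0 : 0 < r := Real.sqrt_pos.2 ht0
    have hr2 : r ^ 2 = t := Real.sq_sqrt ht0.le
    have hγkr : γk < r := by nlinarith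
    -- annuli
    set D : ℕ → Set (EuclideanSpace ℝ (Fin n)) := fun j =>
      if j = 0 then Metric.ball x (2^(j+1) * r)
      else Metric.ball x (2^(j+1) * r) \ Metric.ball x (2^j * r) with hDdef
    have hDmeas : ∀ j, MeasurableSet (D j) := by
      intro j
      rcases eq_or_ne j 0 with h | h
      · simp only [hDdef, if_pos h]
        exact measurableSet_ball
      · simp only [hDdef, if_neg h]
        exact measurableSet_ball.diff measurableSet_ball
    have hDsub : ∀ j, D j ⊆ Metric.ball x (2^(j+1) * r) := by
      intro j
      rcases eq_or_ne j 0 with h | h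
      · simp only [hDdef, if_pos h]
        exact subset_rfl
      · simp only [hDdef, if_neg h]
        exact diff_subset
    have hcover : (univ : Set (EuclideanSpace ℝ (Fin n))) ⊆ ⋃ j, D j := by
      intro y _
      have hex : ∃ j : ℕ, dist y x < 2^(j+1) * r := by
        obtain ⟨m, hm⟩ := pow_unbounded_of_one_lt (dist y x / r) (one_lt_two (α := ℝ))
        refine ⟨m, ?_⟩
        rw [div_lt_iff₀ hr0] at hm
        have : (2:ℝ)^m ≤ 2^(m+1) := pow_le_pow_right₀ one_le_two (Nat.le_succ m)
        nlinarith
      set j := Nat.find hex with hjdef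
      have hj1 : dist y x < 2^(j+1) * r := Nat.find_spec hex
      rcases Nat.eq_zero_or_pos j with h0 | hpos
      · refine mem_iUnion.2 ⟨0, ?_⟩
        simp only [hDdef, ↓reduceIte]
        rw [h0] at hj1
        exact Metric.mem_ball.2 hj1
      · refine mem_iUnion.2 ⟨j, ?_⟩
        simp only [hDdef, if_neg hpos.ne']
        refine ⟨Metric.mem_ball.2 hj1, fun hmem => ?_⟩
        have hnot : ¬ dist y x < 2^((j-1)+1) * r := Nat.find_min hex (by omega)
        rw [show (j-1)+1 = j by omega] at hnot
        exact hnot (Metric.mem_ball.1 hmem)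
    -- exponential bound on each annulus
    have hexp_on : ∀ j, ∀ y ∈ D j, Real.exp (-c₀ * ‖x - y‖^2 / t)
        ≤ (if j = 0 then (1:ℝ) else Real.exp (-(c₀ * 4 ^ j))) := by
      intro j y hy
      rcases Nat.eq_zero_or_pos j with h0 | hpos
      · subst h0
        simp only [↓reduceIte]
        rw [Real.exp_le_one_iff]
        apply div_nonpos_of_nonpos_of_nonneg _ ht0.le
        nlinarith [sq_nonneg ‖x - y‖]
      · rw [if_neg hpos.ne']
        simp only [hDdef, if_neg hpos.ne', mem_diff, Metric.mem_ball, not_lt] at hy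
        have hdist : 2^j * r ≤ ‖x - y‖ := by
          rw [show ‖x - y‖ = dist y x by rw [dist_comm, dist_eq_norm]]
          exact hy.2
        have h42 : (4:ℝ)^j = (2^j)^2 := by
          rw [← pow_mul, mul_comm, pow_mul]; norm_num
        have hsq : (4:ℝ)^j * t ≤ ‖x - y‖^2 := by
          have h1 : (2^j * r)^2 ≤ ‖x - y‖^2 := by
            apply sq_le_sq' _ hdist
            nlinarith [pow_pos (zero_lt_two (α := ℝ)) j]
          calc (4:ℝ)^j * t = (2^j * r)^2 := by rw [h42, mul_pow, hr2]
            _ ≤ ‖x - y‖^2 := h1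
        apply Real.exp_le_exp.2
        rw [div_le_iff₀ ht0]
        nlinarith
    -- bound on each piece
    have hpiece : ∀ j : ℕ,
        ∫⁻ y in D j, ENNReal.ofReal (Real.exp (-c₀ * ‖x - y‖^2 / t) * |f y|)
          ≤ ENNReal.ofReal ((M * κ * A * r^n) * (1/2)^j) := by
      intro j
      set b : ℝ := (if j = 0 then (1:ℝ) else Real.exp (-(c₀ * 4 ^ j))) with hbdef
      have hb0 : 0 ≤ b := by
        rw [hbdef]; split
        · norm_num
        · exact (Real.exp_pos _).le
      have hγle : γ x ≤ 2^(j+1) * r := by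
        have h2 : (2:ℝ) ≤ 2^(j+1) := by
          calc (2:ℝ) = 2^1 := (pow_one 2).symm
            _ ≤ 2^(j+1) := pow_le_pow_right₀ one_le_two (by omega)
        nlinarith
      calc ∫⁻ y in D j, ENNReal.ofReal (Real.exp (-c₀ * ‖x - y‖^2 / t) * |f y|)
          ≤ ∫⁻ y in D j, ENNReal.ofReal (b * |f y|) := by
            apply setLIntegral_mono' (hDmeas j)
            intro y hy
            exact ENNReal.ofReal_le_ofReal
              (mul_le_mul_of_nonneg_right (hexp_on j y hy) (abs_nonneg _))
        _ = ENNReal.ofReal b * ∫⁻ y in D j, ENNReal.ofReal |f y| := by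
            simp_rw [ENNReal.ofReal_mul hb0]
            exact lintegral_const_mul' _ _ ENNReal.ofReal_ne_top
        _ ≤ ENNReal.ofReal b * ∫⁻ y in Metric.ball x (2^(j+1) * r), ENNReal.ofReal |f y| :=
            mul_le_mul_right (lintegral_mono_set (hDsub j)) _
        _ ≤ ENNReal.ofReal b * ENNReal.ofReal (M * ((2^(j+1) * r)^n * κ)) :=
            mul_le_mul_right (hball _ hγle) _
        _ = ENNReal.ofReal (b * (M * ((2^(j+1) * r)^n * κ))) :=
            (ENNReal.ofReal_mul hb0).symm
        _ ≤ ENNReal.ofReal ((M * κ * A * r^n) * (1/2)^j) := by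
            apply ENNReal.ofReal_le_ofReal
            have hterm := aux_term_bound n hc₀ j
            rw [← hbdef, ← hAdef] at hterm
            have hexpand : (2^(j+1) * r)^n = (2:ℝ)^((j+1)*n) * r^n := by
              rw [mul_pow, ← pow_mul]
            rw [hexpand]
            calc b * (M * ((2:ℝ)^((j+1)*n) * r^n * κ))
                = (b * (2:ℝ)^((j+1)*n)) * (M * r^n * κ) := by ring
              _ ≤ (A * (1/2)^j) * (M * r^n * κ) := by
                  apply mul_le_mul_of_nonneg_right hterm (by positivity)
              _ = (M * κ * A * r^n) * (1/2)^j := by ring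
    -- sum the pieces
    have hB : ∫⁻ y, ENNReal.ofReal (Real.exp (-c₀ * ‖x - y‖^2 / t) * |f y|)
        ≤ ENNReal.ofReal (M * κ * S * r^n) := by
      calc ∫⁻ y, ENNReal.ofReal (Real.exp (-c₀ * ‖x - y‖^2 / t) * |f y|)
          = ∫⁻ y in univ, ENNReal.ofReal (Real.exp (-c₀ * ‖x - y‖^2 / t) * |f y|) := by
            rw [setLIntegral_univ]
        _ ≤ ∫⁻ y in ⋃ j, D j, ENNReal.ofReal (Real.exp (-c₀ * ‖x - y‖^2 / t) * |f y|) :=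
            lintegral_mono_set hcover
        _ ≤ ∑' j, ∫⁻ y in D j, ENNReal.ofReal (Real.exp (-c₀ * ‖x - y‖^2 / t) * |f y|) :=
            lintegral_iUnion_le _ _
        _ ≤ ∑' j : ℕ, ENNReal.ofReal ((M * κ * A * r^n) * (1/2)^j) :=
            ENNReal.tsum_le_tsum hpiece
        _ = ENNReal.ofReal (∑' j : ℕ, (M * κ * A * r^n) * (1/2)^j) := by
            rw [ENNReal.ofReal_tsum_of_nonneg (fun j => by positivity)
              (summable_geometric_two.mul_left _)]
        _ = ENNReal.ofReal (M * κ * S * r^n) := by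
            rw [tsum_mul_left, tsum_geometric_two, hSdef]
            ring_nf
    -- pointwise kernel bound
    have hpoint : ∀ y, |K t x y| * |f y|
        ≤ (C₀ * t ^ (-1 - (n:ℝ)/2) * ((γ x)^2 / t)) * (Real.exp (-c₀ * ‖x - y‖^2 / t) * |f y|) := by
      intro y
      have h1 := hK t ht0 x y
      have hb1 : (1:ℝ) ≤ 1 + ‖x - y‖ / Real.sqrt t :=
        le_add_of_nonneg_right (div_nonneg (norm_nonneg _) (Real.sqrt_nonneg _))
      have hQ : (1 + ‖x - y‖ / Real.sqrt t) ^ (-1 - (n:ℝ)) ≤ 1 :=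
        Real.rpow_le_one_of_one_le_of_nonpos hb1 (by
          have : (0:ℝ) ≤ (n:ℝ) := Nat.cast_nonneg n
          linarith)
      have hP : (1 + t / (γ x)^2)⁻¹ ≤ (γ x)^2 / t := by
        have hpos : 0 < t / (γ x)^2 := div_pos ht0 (pow_pos hγx 2)
        have h2 : (1 + t / (γ x)^2)⁻¹ ≤ (t / (γ x)^2)⁻¹ :=
          inv_anti₀ hpos (le_add_of_nonneg_left zero_le_one)
        rwa [inv_div] at h2
      have hK' : |K t x y| ≤ (C₀ * t ^ (-1 - (n:ℝ)/2) * ((γ x)^2 / t))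
          * Real.exp (-c₀ * ‖x - y‖^2 / t) := by
        calc |K t x y| ≤ C₀ * t ^ (-1 - (n:ℝ)/2) * Real.exp (-c₀ * ‖x - y‖^2 / t) *
            (1 + t / (γ x)^2)⁻¹ * (1 + ‖x - y‖ / Real.sqrt t) ^ (-1 - (n:ℝ)) := h1
          _ ≤ C₀ * t ^ (-1 - (n:ℝ)/2) * Real.exp (-c₀ * ‖x - y‖^2 / t) *
              ((γ x)^2 / t) * 1 := by
                have h0 : (0:ℝ) ≤ C₀ * t ^ (-1 - (n:ℝ)/2) * Real.exp (-c₀ * ‖x - y‖^2 / t) := by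
                  have := Real.rpow_pos_of_pos ht0 (-1 - (n:ℝ)/2)
                  positivity
                apply mul_le_mul _ hQ (by positivity) (by positivity)
                exact mul_le_mul_of_nonneg_left hP h0
          _ = (C₀ * t ^ (-1 - (n:ℝ)/2) * ((γ x)^2 / t)) * Real.exp (-c₀ * ‖x - y‖^2 / t) := by
                ring
      calc |K t x y| * |f y|
          ≤ ((C₀ * t ^ (-1 - (n:ℝ)/2) * ((γ x)^2 / t)) * Real.exp (-c₀ * ‖x - y‖^2 / t)) * |f y| :=
            mul_le_mul_of_nonneg_right hK' (abs_nonneg _)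
        _ = (C₀ * t ^ (-1 - (n:ℝ)/2) * ((γ x)^2 / t)) *
            (Real.exp (-c₀ * ‖x - y‖^2 / t) * |f y|) := by ring
    have hC'0 : 0 ≤ C₀ * t ^ (-1 - (n:ℝ)/2) * ((γ x)^2 / t) := by
      have := Real.rpow_pos_of_pos ht0 (-1 - (n:ℝ)/2)
      positivity
    have hrn : r ^ n = t ^ ((n:ℝ)/2) := by
      rw [hrdef, Real.sqrt_eq_rpow, ← Real.rpow_natCast (t ^ ((1:ℝ)/2)) n,
        ← Real.rpow_mul ht0.le]
      congr 1
      ring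
    calc ∫⁻ y, ENNReal.ofReal (|K t x y| * |f y|)
        ≤ ∫⁻ y, ENNReal.ofReal ((C₀ * t ^ (-1 - (n:ℝ)/2) * ((γ x)^2 / t)) *
            (Real.exp (-c₀ * ‖x - y‖^2 / t) * |f y|)) :=
          lintegral_mono fun y => ENNReal.ofReal_le_ofReal (hpoint y)
      _ = ENNReal.ofReal (C₀ * t ^ (-1 - (n:ℝ)/2) * ((γ x)^2 / t)) *
            ∫⁻ y, ENNReal.ofReal (Real.exp (-c₀ * ‖x - y‖^2 / t) * |f y|) := by
          simp_rw [ENNReal.ofReal_mul hC'0]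
          exact lintegral_const_mul' _ _ ENNReal.ofReal_ne_top
      _ ≤ ENNReal.ofReal (C₀ * t ^ (-1 - (n:ℝ)/2) * ((γ x)^2 / t)) *
            ENNReal.ofReal (M * κ * S * r^n) := mul_le_mul_right hB _
      _ = ENNReal.ofReal ((C₀ * t ^ (-1 - (n:ℝ)/2) * ((γ x)^2 / t)) * (M * κ * S * r^n)) :=
          (ENNReal.ofReal_mul hC'0).symm
      _ = ENNReal.ofReal ((C₀ * (γ x)^2 * M * κ * S) * t ^ (-2:ℝ)) := by
          congr 1
          rw [hrn, div_eq_mul_inv ((γ x)^2) t, ← Real.rpow_neg_one t]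
          rw [show (C₀ * t ^ (-1 - (n:ℝ)/2) * ((γ x)^2 * t ^ (-1:ℝ))) *
              (M * κ * S * t ^ ((n:ℝ)/2))
            = (C₀ * (γ x)^2 * M * κ * S) *
              (t ^ (-1 - (n:ℝ)/2) * t ^ (-1:ℝ) * t ^ ((n:ℝ)/2)) from by ring]
          rw [← Real.rpow_add ht0, ← Real.rpow_add ht0]
          norm_num
          left
          rw [show (-1 - (n:ℝ)/2 + -1 + (n:ℝ)/2) = -2 by ring, Real.rpow_neg ht0.le]
          norm_num
  -- integrate in t
  have hc2 : 0 ≤ C₀ * (γ x)^2 * M * κ * S := by positivity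
  have hint2 : IntegrableOn (fun t : ℝ => t ^ (-2:ℝ)) (Ioi (γk^2)) volume :=
    integrableOn_Ioi_rpow_of_lt (by norm_num) hT
  calc ∫⁻ t in Ioi (γk ^ 2), ∫⁻ y, ENNReal.ofReal (|K t x y| * |f y|)
      ≤ ∫⁻ t in Ioi (γk ^ 2),
          ENNReal.ofReal ((C₀ * (γ x)^2 * M * κ * S) * t ^ (-2:ℝ)) :=
        setLIntegral_mono' measurableSet_Ioi hstep1
    _ = ENNReal.ofReal (C₀ * (γ x)^2 * M * κ * S) *
          ∫⁻ t in Ioi (γk ^ 2), ENNReal.ofReal (t ^ (-2:ℝ)) := by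
        simp_rw [ENNReal.ofReal_mul hc2]
        exact lintegral_const_mul' _ _ ENNReal.ofReal_ne_top
    _ = ENNReal.ofReal (C₀ * (γ x)^2 * M * κ * S) *
          ENNReal.ofReal (∫ t in Ioi (γk ^ 2), t ^ (-2:ℝ)) := by
        rw [ofReal_integral_eq_lintegral_ofReal hint2
          ((ae_restrict_iff' measurableSet_Ioi).2 (Filter.Eventually.of_forall
            fun t ht => Real.rpow_nonneg (hT.trans ht).le _))]
    _ = ENNReal.ofReal (C₀ * (γ x)^2 * M * κ * S) * ENNReal.ofReal ((γk^2)⁻¹) := by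
        rw [integral_Ioi_rpow_of_lt (by norm_num) hT]
        norm_num [Real.rpow_neg_one]
    _ = ENNReal.ofReal ((C₀ * (γ x)^2 * M * κ * S) * (γk^2)⁻¹) :=
        (ENNReal.ofReal_mul hc2).symm
    _ ≤ ENNReal.ofReal (4 * C₀ * κ * S * M) := by
        apply ENNReal.ofReal_le_ofReal
        rw [← div_eq_mul_inv, div_le_iff₀ hT]
        have h4 : (γ x)^2 ≤ 4 * γk^2 := by nlinarith
        nlinarith [mul_nonneg (mul_nonneg (mul_nonneg hC₀.le hM) hκpos.le) hSpos.le]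

end
end

section
/- Let ℒ = −Δ + V with V ∈ RH_q, q > n/2, and suppose the Riesz kernel bound |R^ℒ_ℓ(x,y)| ≤ C |x-y|^{-n} (1 + |x-y|/γ(x))^{-1} holds. Then for f ∈ BMO^ℒ(ℝⁿ), the tail integral T(f)(x) = ∫_{|x-y| > M γ(x)} |R^ℒ_ℓ(x,y)| |f(y)| dy satisfies T(f)(x) ≤ C_M ‖f‖_{BMO^ℒ(ℝⁿ)} for every fixed 0 < M < 1. -/
open MeasureTheory Set
open scoped ENNReal
open Metric

noncomputable section

/-- let `ℒ = -Δ + V`, `V ∈ RH_q` with `q > n/2` and critical radius `γ`,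
and suppose the Riesz kernel bound
`|R^ℒ_ℓ(x,y)| ≤ C₀ |x-y|^{-n} (1+|x-y|/γ(x))⁻¹` holds. Then for `f ∈ BMO^ℒ(ℝⁿ)` with
norm at most `Mf` and every fixed `0 < M < 1`, the tail integral satisfies
`∫_{|x-y| > M γ(x)} |R^ℒ_ℓ(x,y)| |f(y)| dy ≤ C_M Mf`. -/
theorem schrodinger_riesz_tail_estimate (n : ℕ) (hn : 1 ≤ n) (C₀ : ℝ) (hC₀ : 0 < C₀)
    (M : ℝ) (hM0 : 0 < M) (hM1 : M < 1) :
    ∃ C > 0, ∀ (γ : EuclideanSpace ℝ (Fin n) → ℝ)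
      (R : EuclideanSpace ℝ (Fin n) → EuclideanSpace ℝ (Fin n) → ℝ)
      (f : EuclideanSpace ℝ (Fin n) → ℝ) (Mf : ℝ)
      (x : EuclideanSpace ℝ (Fin n)),
      (∀ z, 0 < γ z) → 0 ≤ Mf → LocallyIntegrable f volume → IsBMOLWith γ f Mf →
      (∀ x' y : EuclideanSpace ℝ (Fin n), x' ≠ y →
        |R x' y| ≤ C₀ * ‖x' - y‖ ^ (-(n : ℝ)) * (1 + ‖x' - y‖ / γ x')⁻¹) →
      ∫⁻ y in {y : EuclideanSpace ℝ (Fin n) | M * γ x < ‖x - y‖},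
          ENNReal.ofReal (|R x y| * |f y|)
        ≤ ENNReal.ofReal (C * Mf) := by
  classical
  haveI : Nonempty (Fin n) := Fin.pos_iff_nonempty.mp hn
  set c : ℝ := (volume (ball (0 : EuclideanSpace ℝ (Fin n)) 1)).toReal with hc_def
  have hc : 0 < c :=
    ENNReal.toReal_pos (measure_ball_pos volume _ one_pos).ne' measure_ball_lt_top.ne
  refine ⟨C₀ * c * 2 ^ (n + 1) * (M⁻¹) ^ (n + 1), by positivity, ?_⟩
  intro γ R f Mf x hγ hMf hf hbmo hR
  have hbmo2 := hbmo.2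
  set g : ℝ := γ x with hg_def
  have hg : 0 < g := hγ x
  set D : ℝ := C₀ * c * 2 ^ n * (M⁻¹) ^ (n + 1) with hD_def
  -- the annuli
  set A : ℕ → Set (EuclideanSpace ℝ (Fin n)) :=
    fun j => closedBall x (M * 2 ^ (j + 1) * g) \ closedBall x (M * 2 ^ j * g) with hA_def
  have hmemA : ∀ j y, y ∈ A j ↔ M * 2 ^ j * g < ‖x - y‖ ∧ ‖x - y‖ ≤ M * 2 ^ (j + 1) * g := by
    intro j y
    simp only [hA_def, mem_diff, mem_closedBall, dist_eq_norm, norm_sub_rev y x, not_le]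
    tauto
  have hAmeas : ∀ j, MeasurableSet (A j) :=
    fun j => measurableSet_closedBall.diff measurableSet_closedBall
  have hAdisj : Pairwise (Function.onFun Disjoint A) := by
    have key : ∀ i j : ℕ, i < j → Disjoint (A i) (A j) := by
      intro i j hij
      rw [Set.disjoint_left]
      intro y hyi hyj
      rw [hmemA] at hyi hyj
      have h1 : M * 2 ^ (i + 1) * g ≤ M * 2 ^ j * g := by
        have h2 : (2 : ℝ) ^ (i + 1) ≤ 2 ^ j := pow_le_pow_right₀ one_le_two hij
        exact mul_le_mul_of_nonneg_right (mul_le_mul_of_nonneg_left h2 hM0.le) hg.le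
      linarith [hyi.2, hyj.1]
    intro i j hij
    rcases hij.lt_or_gt with h | h
    · exact key i j h
    · exact (key j i h).symm
  have hS : {y : EuclideanSpace ℝ (Fin n) | M * γ x < ‖x - y‖} = ⋃ j, A j := by
    ext y
    simp only [mem_setOf_eq, mem_iUnion, hmemA, ← hg_def]
    constructor
    · intro hy
      have h2 : ∃ k, ‖x - y‖ ≤ M * 2 ^ k * g := by
        obtain ⟨k, hk⟩ := pow_unbounded_of_one_lt (‖x - y‖ / (M * g)) (one_lt_two (α := ℝ))
        refine ⟨k, ?_⟩
        rw [div_lt_iff₀ (by positivity)] at hk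
        calc ‖x - y‖ ≤ 2 ^ k * (M * g) := hk.le
          _ = M * 2 ^ k * g := by ring
      set k₀ := Nat.find h2 with hk₀
      have hspec := Nat.find_spec h2
      have hk₀ne : k₀ ≠ 0 := by
        intro h0
        rw [hk₀] at h0
        have := Nat.find_spec h2
        rw [h0] at this
        simp only [pow_zero, mul_one] at this
        linarith
      obtain ⟨j, hj⟩ := Nat.exists_eq_succ_of_ne_zero hk₀ne
      refine ⟨j, ?_, by rw [← Nat.succ_eq_add_one, ← hj]; exact hspec⟩
      have := Nat.find_min h2 (m := j) (by omega)
      push_neg at this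
      exact this
    · rintro ⟨j, hj1, _⟩
      have : M * g ≤ M * 2 ^ j * g := by
        have h1 : (1 : ℝ) ≤ 2 ^ j := one_le_pow₀ one_le_two
        have := mul_le_mul_of_nonneg_right (mul_le_mul_of_nonneg_left h1 hM0.le) hg.le
        simpa using this
      linarith
  -- per-annulus estimate
  have key : ∀ j : ℕ, ∫⁻ y in A j, ENNReal.ofReal (|R x y| * |f y|)
      ≤ ENNReal.ofReal (D * Mf * (2⁻¹ : ℝ) ^ j) := by
    intro j
    set r₁ : ℝ := M * 2 ^ j * g with hr₁_def
    set r : ℝ := 2 ^ (j + 1) * g with hr_def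
    have hr₁ : 0 < r₁ := by positivity
    have hrpos : 0 < r := by positivity
    have hγr : γ x ≤ r := by
      have : (1 : ℝ) ≤ 2 ^ (j + 1) := one_le_pow₀ one_le_two
      rw [hr_def, ← hg_def]; nlinarith
    set K : ℝ := C₀ * (r₁ ^ n)⁻¹ * (M * 2 ^ j)⁻¹ with hK_def
    have hK : 0 < K := by positivity
    have hsub : A j ⊆ ball x r := by
      intro y hy
      rw [hmemA] at hy
      rw [mem_ball, dist_eq_norm, norm_sub_rev]
      calc ‖x - y‖ ≤ M * 2 ^ (j + 1) * g := hy.2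
        _ < 1 * 2 ^ (j + 1) * g := by
            have : (0:ℝ) < 2 ^ (j+1) * g := by positivity
            nlinarith
        _ = r := by rw [hr_def]; ring
    have hbound : ∀ y ∈ A j, |R x y| * |f y| ≤ K * |f y| := by
      intro y hy
      rw [hmemA] at hy
      obtain ⟨hy1, hy2⟩ := hy
      have hd : 0 < ‖x - y‖ := lt_trans hr₁ hy1
      have hxy : x ≠ y := sub_ne_zero.mp (norm_pos_iff.mp hd)
      have hRb := hR x y hxy
      have b1 : ‖x - y‖ ^ (-(n : ℝ)) ≤ (r₁ ^ n)⁻¹ := by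
        rw [Real.rpow_neg hd.le, Real.rpow_natCast]
        exact inv_anti₀ (by positivity) (pow_le_pow_left₀ hr₁.le hy1.le n)
      have b2 : (1 + ‖x - y‖ / g)⁻¹ ≤ (M * 2 ^ j)⁻¹ := by
        apply inv_anti₀ (by positivity)
        have : M * 2 ^ j < ‖x - y‖ / g := by
          rw [lt_div_iff₀ hg]
          calc M * 2 ^ j * g = r₁ := rfl
            _ < ‖x - y‖ := hy1
        linarith
      have hRK : |R x y| ≤ K := by
        calc |R x y| ≤ C₀ * ‖x - y‖ ^ (-(n : ℝ)) * (1 + ‖x - y‖ / γ x)⁻¹ := hRb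
          _ ≤ C₀ * (r₁ ^ n)⁻¹ * (M * 2 ^ j)⁻¹ := by
              have hnn1 : (0:ℝ) ≤ ‖x - y‖ ^ (-(n : ℝ)) := Real.rpow_nonneg (norm_nonneg _) _
              have hnn2 : (0:ℝ) ≤ (1 + ‖x - y‖ / γ x)⁻¹ := by
                rw [← hg_def]; positivity
              have := mul_le_mul (mul_le_mul_of_nonneg_left b1 hC₀.le) b2 hnn2 (by positivity)
              rw [← hg_def]
              exact this
      exact mul_le_mul_of_nonneg_right hRK (abs_nonneg _)
    have hvol : (volume (ball x r)).toReal = r ^ n * c := by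
      rw [Measure.addHaar_ball volume x hrpos.le, ENNReal.toReal_mul, ENNReal.toReal_ofReal
        (by positivity), finrank_euclideanSpace_fin, hc_def]
    have hvolpos : 0 < (volume (ball x r)).toReal :=
      ENNReal.toReal_pos (measure_ball_pos volume x hrpos).ne' measure_ball_lt_top.ne
    have hint : IntegrableOn (fun y => |f y|) (ball x r) volume :=
      ((hf.integrableOn_isCompact (isCompact_closedBall x r)).mono_set
        ball_subset_closedBall).abs
    have hI : ∫ y in ball x r, |f y| ≤ (volume (ball x r)).toReal * Mf := by
      have h2 := hbmo2 x r hγr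
      calc ∫ y in ball x r, |f y|
          = (volume (ball x r)).toReal *
            (((volume (ball x r)).toReal)⁻¹ * ∫ y in ball x r, |f y|) := by
            field_simp
        _ ≤ (volume (ball x r)).toReal * Mf :=
            mul_le_mul_of_nonneg_left h2 hvolpos.le
    calc ∫⁻ y in A j, ENNReal.ofReal (|R x y| * |f y|)
        ≤ ∫⁻ y in A j, ENNReal.ofReal (K * |f y|) := by
          refine lintegral_mono_ae ?_
          refine (ae_restrict_iff' (hAmeas j)).mpr (ae_of_all _ fun y hy => ?_)
          exact ENNReal.ofReal_le_ofReal (hbound y hy)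
      _ = ENNReal.ofReal K * ∫⁻ y in A j, ENNReal.ofReal |f y| := by
          simp_rw [ENNReal.ofReal_mul hK.le]
          exact lintegral_const_mul' _ _ ENNReal.ofReal_ne_top
      _ ≤ ENNReal.ofReal K * ∫⁻ y in ball x r, ENNReal.ofReal |f y| :=
          mul_le_mul_right (lintegral_mono_set hsub) _
      _ = ENNReal.ofReal K * ENNReal.ofReal (∫ y in ball x r, |f y|) := by
          rw [ofReal_integral_eq_lintegral_ofReal hint (ae_of_all _ fun y => abs_nonneg _)]
      _ ≤ ENNReal.ofReal K * ENNReal.ofReal ((volume (ball x r)).toReal * Mf) :=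
          mul_le_mul_right (ENNReal.ofReal_le_ofReal hI) _
      _ = ENNReal.ofReal (K * ((volume (ball x r)).toReal * Mf)) :=
          (ENNReal.ofReal_mul hK.le).symm
      _ = ENNReal.ofReal (D * Mf * (2⁻¹ : ℝ) ^ j) := by
          rw [hvol]
          congr 1
          rw [hK_def, hD_def, hr_def, hr₁_def]
          field_simp
          rw [div_pow, div_pow, one_pow, one_pow]
          field_simp
          ring
  calc ∫⁻ y in {y : EuclideanSpace ℝ (Fin n) | M * γ x < ‖x - y‖},
        ENNReal.ofReal (|R x y| * |f y|)
      = ∑' j, ∫⁻ y in A j, ENNReal.ofReal (|R x y| * |f y|) := by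
        rw [hS, lintegral_iUnion hAmeas hAdisj]
    _ ≤ ∑' j, ENNReal.ofReal (D * Mf * (2⁻¹ : ℝ) ^ j) := ENNReal.tsum_le_tsum key
    _ = ENNReal.ofReal (∑' j, D * Mf * (2⁻¹ : ℝ) ^ j) := by
        rw [ENNReal.ofReal_tsum_of_nonneg (fun j => by positivity)
          (((summable_geometric_of_lt_one (by norm_num) (by norm_num)).mul_left (D * Mf)))]
    _ = ENNReal.ofReal (C₀ * c * 2 ^ (n + 1) * (M⁻¹) ^ (n + 1) * Mf) := by
        congr 1
        rw [tsum_mul_left, tsum_geometric_of_lt_one (by norm_num) (by norm_num)]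
        rw [hD_def]
        norm_num
        ring


end
end

section
/- For the classical heat kernel W_t(x,y) = (4πt)^{-n/2} e^{-|x-y|²/(4t)} and ρ > 2, the variation seminorm of the kernel difference satisfies ‖W_t(x,·) − W_t(x₁,·)‖_{E_ρ}(y) ≤ C |x − x₁| / |x − y|^{n+1} whenever |x − y| ≥ 2|x − x₁|, with C depending only on n and ρ. -/
open MeasureTheory Filter Set
open scoped ENNReal

noncomputable section

/-- A strictly decreasing sequence of positive reals converging to zero. -/
def NullSeq (t : ℕ → ℝ) : Prop :=
  StrictAnti t ∧ (∀ j, 0 < t j) ∧ Tendsto t atTop (nhds 0)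

/-- The `ρ`-variation seminorm `‖F‖_{E_ρ}`: the supremum, over all strictly decreasing
null sequences `{t_j}`, of `(∑_j |F(t_j) - F(t_{j+1})|^ρ)^{1/ρ}` (valued in `ℝ≥0∞`). -/
def eVar (ρ : ℝ) (F : ℝ → ℝ) : ℝ≥0∞ :=
  ⨆ t : {t : ℕ → ℝ // NullSeq t},
    (∑' j : ℕ, ENNReal.ofReal (|F (t.1 j) - F (t.1 (j + 1))| ^ ρ)) ^ (1 / ρ)

/-- The classical heat kernel `W_t(x,y) = (4πt)^{-n/2} e^{-|x-y|²/(4t)}`. -/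
def heatKernel (n : ℕ) (t : ℝ) (x y : EuclideanSpace ℝ (Fin n)) : ℝ :=
  (4 * Real.pi * t) ^ (-(n : ℝ) / 2) * Real.exp (-‖x - y‖ ^ 2 / (4 * t))

section Helpers
open Real


-- Lemma A: ℓ^ρ ≤ ℓ^1 in ENNReal
lemma tsum_rpow_le_tsum (a : ℕ → ℝ≥0∞) {ρ : ℝ} (hρ : 1 < ρ) :
    (∑' j, (a j) ^ ρ) ^ (1/ρ) ≤ ∑' j, a j := by
  have hρ0 : (0:ℝ) < ρ := by linarith
  set S := ∑' j, a j with hS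
  rcases eq_or_ne S ⊤ with h | h
  · simp [h]
  have hterm : ∀ j, (a j) ^ ρ ≤ a j * S ^ (ρ - 1) := by
    intro j
    rcases eq_or_ne (a j) 0 with h0 | h0
    · simp [h0, ENNReal.zero_rpow_of_pos hρ0]
    have hjS : a j ≤ S := ENNReal.le_tsum j
    have hjt : a j ≠ ⊤ := fun ht => h (top_le_iff.mp (ht ▸ hjS))
    calc (a j) ^ ρ = (a j) ^ (1 + (ρ - 1)) := by norm_num
      _ = (a j) ^ (1:ℝ) * (a j) ^ (ρ - 1) := ENNReal.rpow_add _ _ h0 hjt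
      _ ≤ a j * S ^ (ρ - 1) := by
          rw [ENNReal.rpow_one]
          exact mul_le_mul_right (ENNReal.rpow_le_rpow hjS (by linarith)) _
  have hsum : (∑' j, (a j) ^ ρ) ≤ S ^ ρ := by
    calc (∑' j, (a j) ^ ρ) ≤ ∑' j, a j * S ^ (ρ - 1) := ENNReal.tsum_le_tsum hterm
      _ = S * S ^ (ρ - 1) := by rw [ENNReal.tsum_mul_right]
      _ = S ^ ρ := by
          rcases eq_or_ne S 0 with h0 | h0
          · simp [h0, ENNReal.zero_rpow_of_pos hρ0, ENNReal.zero_rpow_of_pos (by linarith : (0:ℝ) < ρ - 1)]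
          · nth_rewrite 1 [← ENNReal.rpow_one S]
            rw [← ENNReal.rpow_add _ _ h0 h]
            norm_num
  calc (∑' j, (a j) ^ ρ) ^ (1/ρ) ≤ (S ^ ρ) ^ (1/ρ) :=
        ENNReal.rpow_le_rpow hsum (by positivity)
    _ = S := by rw [← ENNReal.rpow_mul, mul_one_div_cancel hρ0.ne', ENNReal.rpow_one]

noncomputable section

def Wf (n : ℕ) (a t : ℝ) : ℝ := (4 * π * t) ^ (-(n:ℝ)/2) * Real.exp (-a / (4 * t))

def Wd (n : ℕ) (a t : ℝ) : ℝ :=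
  (4 * π * t) ^ (-(n:ℝ)/2) * Real.exp (-a / (4 * t)) * ((-(n:ℝ)/2) / t + a / (4 * t ^ 2))

def Gd (n : ℕ) (s t : ℝ) : ℝ :=
  (4 * π * t) ^ (-(n:ℝ)/2) * Real.exp (-s / (4 * t)) *
    (-(1/(4*t)) * ((-(n:ℝ)/2) / t + s / (4 * t ^ 2)) + 1 / (4 * t ^ 2))

lemma fourpit_pos {t : ℝ} (ht : 0 < t) : 0 < 4 * π * t := by positivity

lemma hasDerivAt_Wf (n : ℕ) (a : ℝ) {t : ℝ} (ht : 0 < t) :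
    HasDerivAt (Wf n a) (Wd n a t) t := by
  set c : ℝ := -(n:ℝ)/2
  have h1 : HasDerivAt (fun t : ℝ => 4 * π * t) (4 * π) t := by
    simpa using (hasDerivAt_id t).const_mul (4 * π)
  have h2 := h1.rpow_const (p := c) (Or.inl (fourpit_pos ht).ne')
  have h3 : HasDerivAt (fun t : ℝ => -a / (4 * t)) (a / (4 * t ^ 2)) t := by
    have h3' : HasDerivAt (fun t : ℝ => (-a/4) * t⁻¹) ((-a/4) * (-(t^2)⁻¹)) t :=
      (hasDerivAt_inv ht.ne').const_mul (-a/4)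
    have : (fun t : ℝ => -a / (4 * t)) = fun t : ℝ => (-a/4) * t⁻¹ := by
      funext u; rw [div_eq_mul_inv, mul_inv]; ring
    rw [this]
    convert h3' using 1
    field_simp
  have h4 := h3.exp
  have := h2.mul h4
  convert this using 1 <;> try rfl
  unfold Wd
  have h5 : (4 * π * t) ^ (c - 1) = (4 * π * t) ^ c / (4 * π * t) := by
    rw [Real.rpow_sub (fourpit_pos ht), Real.rpow_one]
  rw [h5]
  have hπ : π ≠ 0 := pi_ne_zero
  field_simp
  simp only [c]
  ring

lemma hasDerivAt_Wd_s (n : ℕ) (s : ℝ) {t : ℝ} (ht : 0 < t) :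
    HasDerivAt (fun s => Wd n s t) (Gd n s t) s := by
  set c : ℝ := -(n:ℝ)/2
  have h1 : HasDerivAt (fun s : ℝ => -s / (4*t)) (-(1/(4*t))) s := by
    have : (fun s : ℝ => -s / (4*t)) = fun s : ℝ => s * (-(1/(4*t))) := by
      funext u; ring
    rw [this]; simpa using (hasDerivAt_id s).mul_const (-(1/(4*t)))
  have h2 := h1.exp
  have h3 : HasDerivAt (fun s : ℝ => c / t + s / (4 * t^2)) (1 / (4 * t^2)) s := by
    have : (fun s : ℝ => c / t + s / (4 * t^2)) = fun s : ℝ => c/t + s * (1/(4*t^2)) := by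
      funext u; ring
    rw [this]
    have h := (hasDerivAt_const s (c/t)).add ((hasDerivAt_id s).mul_const (1/(4*t^2)))
    convert h using 1 <;> try rfl
    simp
  have := ((h2.mul h3).const_mul ((4 * π * t) ^ c))
  convert this using 1 <;> try rfl
  · funext u; unfold Wd; simp only [Pi.mul_apply, c]; ring
  · unfold Gd; ring

end

noncomputable section
lemma abs_Gd_le (n : ℕ) {r s t : ℝ} (ht : 0 < t) (hr : 0 ≤ r) (hs : r^2/4 ≤ s) :
    |Gd n s t| ≤ (4*π*t) ^ (-(n:ℝ)/2) * Real.exp (-r^2/(32*t)) * (((n:ℝ)+6)/(8*t^2)) := by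
  set c : ℝ := -(n:ℝ)/2 with hc
  have hs0 : 0 ≤ s := le_trans (by positivity) hs
  have hK : 0 < (4*π*t) ^ c := Real.rpow_pos_of_pos (fourpit_pos ht) _
  set inr := -(1/(4*t)) * (c/t + s/(4*t^2)) + 1/(4*t^2) with hinner
  have e1 : inr = (n:ℝ)/(8*t^2) + 1/(4*t^2) - s/(16*t^3) := by
    rw [hinner, hc]; field_simp; ring
  have babs : |Gd n s t| = (4*π*t) ^ c * Real.exp (-s/(4*t)) * |inr| := by
    unfold Gd
    rw [abs_mul, abs_of_pos (mul_pos hK (Real.exp_pos _))]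
  have habs : |inr| ≤ ((n:ℝ)/(8*t^2) + 1/(4*t^2)) + s/(16*t^3) := by
    rw [e1, abs_le]
    have h1 : 0 ≤ (n:ℝ)/(8*t^2) := by positivity
    have h2 : 0 ≤ s/(16*t^3) := by positivity
    have h3 : 0 < 1/(4*t^2) := by positivity
    constructor <;> linarith
  set X := Real.exp (-r^2/(32*t)) with hX
  have hXpos : 0 < X := Real.exp_pos _
  have hEsplit : Real.exp (-s/(4*t)) = Real.exp (-s/(8*t)) * Real.exp (-s/(8*t)) := by
    rw [← Real.exp_add]; congr 1; ring
  have hE1 : Real.exp (-s/(8*t)) ≤ X := by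
    apply Real.exp_le_exp.mpr
    have h5 : r^2/(32*t) ≤ s/(8*t) := by
      rw [div_le_div_iff₀ (by positivity) (by positivity)]
      nlinarith
    rw [neg_div, neg_div]
    exact neg_le_neg h5
  have hE2 : Real.exp (-s/(8*t)) ≤ 1 := by
    apply Real.exp_le_one_iff.mpr
    have : 0 ≤ s/(8*t) := by positivity
    rw [neg_div]; linarith
  have hE3 : Real.exp (-s/(8*t)) * s ≤ 8*t := by
    have hu : s/(8*t) ≤ Real.exp (s/(8*t)) := by
      linarith [Real.add_one_le_exp (s/(8*t)), Real.exp_pos (s/(8*t))]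
    have hepos := Real.exp_pos (s/(8*t))
    have h6 : s ≤ Real.exp (s/(8*t)) * (8*t) := by
      have := mul_le_mul_of_nonneg_right hu (by positivity : (0:ℝ) ≤ 8*t)
      calc s = s/(8*t) * (8*t) := by field_simp
        _ ≤ Real.exp (s/(8*t)) * (8*t) := this
    rw [neg_div, Real.exp_neg, inv_mul_le_iff₀ hepos]
    linarith
  have hEX : Real.exp (-s/(4*t)) ≤ X := by
    rw [hEsplit]
    calc Real.exp (-s/(8*t)) * Real.exp (-s/(8*t)) ≤ X * 1 :=
      mul_le_mul hE1 hE2 (Real.exp_pos _).le hXpos.le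
      _ = X := mul_one X
  have hEsX : Real.exp (-s/(4*t)) * s ≤ X * (8*t) := by
    rw [hEsplit, mul_assoc]
    exact mul_le_mul hE1 hE3 (mul_nonneg (Real.exp_pos _).le hs0) hXpos.le
  have hA : (0:ℝ) ≤ (n:ℝ)/(8*t^2) + 1/(4*t^2) := by positivity
  have hB : (0:ℝ) ≤ 1/(16*t^3) := by positivity
  have key : Real.exp (-s/(4*t)) * |inr| ≤ X * (((n:ℝ)+6)/(8*t^2)) := by
    calc Real.exp (-s/(4*t)) * |inr|
        ≤ Real.exp (-s/(4*t)) * (((n:ℝ)/(8*t^2) + 1/(4*t^2)) + s/(16*t^3)) :=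
          mul_le_mul_of_nonneg_left habs (Real.exp_pos _).le
      _ = Real.exp (-s/(4*t)) * ((n:ℝ)/(8*t^2) + 1/(4*t^2))
          + (Real.exp (-s/(4*t)) * s) * (1/(16*t^3)) := by ring
      _ ≤ X * ((n:ℝ)/(8*t^2) + 1/(4*t^2)) + (X * (8*t)) * (1/(16*t^3)) :=
          add_le_add (mul_le_mul_of_nonneg_right hEX hA)
            (mul_le_mul_of_nonneg_right hEsX hB)
      _ = X * (((n:ℝ)+6)/(8*t^2)) := by field_simp; ring
  rw [babs]
  calc (4*π*t) ^ c * Real.exp (-s/(4*t)) * |inr|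
      = (4*π*t) ^ c * (Real.exp (-s/(4*t)) * |inr|) := by ring
    _ ≤ (4*π*t) ^ c * (X * (((n:ℝ)+6)/(8*t^2))) := mul_le_mul_of_nonneg_left key hK.le
    _ = (4*π*t) ^ c * X * (((n:ℝ)+6)/(8*t^2)) := by ring

lemma abs_Wd_sub_le (n : ℕ) {r a b t : ℝ} (ht : 0 < t) (hr : 0 ≤ r)
    (ha : r^2/4 ≤ a) (hb : r^2/4 ≤ b) :
    |Wd n a t - Wd n b t|
      ≤ (4*π*t) ^ (-(n:ℝ)/2) * Real.exp (-r^2/(32*t)) * (((n:ℝ)+6)/(8*t^2)) * |a - b| := by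
  have := Convex.norm_image_sub_le_of_norm_hasDerivWithin_le
    (f := fun s => Wd n s t) (f' := fun s => Gd n s t)
    (C := (4*π*t) ^ (-(n:ℝ)/2) * Real.exp (-r^2/(32*t)) * (((n:ℝ)+6)/(8*t^2)))
    (fun s hs => (hasDerivAt_Wd_s n s ht).hasDerivWithinAt)
    (fun s hs => by simpa [Real.norm_eq_abs] using abs_Gd_le n ht hr hs)
    (convex_Ici (r^2/4)) hb ha
  simpa [Real.norm_eq_abs] using this
end

noncomputable section

def hmaj (n : ℕ) (r t : ℝ) : ℝ := t ^ (-(n:ℝ)/2 - 2) * Real.exp (-r^2/(32*t))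

lemma bound_eq_hmaj (n : ℕ) (r : ℝ) {t : ℝ} (ht : 0 < t) :
    (4*π*t) ^ (-(n:ℝ)/2) * Real.exp (-r^2/(32*t)) * (((n:ℝ)+6)/(8*t^2))
      = (((n:ℝ)+6)/8) * (4*π) ^ (-(n:ℝ)/2) * hmaj n r t := by
  set c : ℝ := -(n:ℝ)/2
  have h1 : (4*π*t) ^ c = (4*π) ^ c * t ^ c := by
    rw [Real.mul_rpow (by positivity) ht.le]
  have h2 : t ^ (c - 2) = t ^ c / t ^ (2:ℕ) := by
    rw [Real.rpow_sub ht]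
    congr 1
    rw [← Real.rpow_natCast t 2]
    norm_num
  unfold hmaj
  rw [h1, h2]
  field_simp

lemma continuousOn_Wd (n : ℕ) (a : ℝ) : ContinuousOn (Wd n a) (Ioi (0:ℝ)) := by
  intro t ht
  have ht' : (0:ℝ) < t := ht
  apply ContinuousAt.continuousWithinAt
  have c0 : ContinuousAt (fun t : ℝ => 4*π*t) t := by fun_prop
  have c1 : ContinuousAt (fun t : ℝ => (4*π*t) ^ (-(n:ℝ)/2)) t :=
    c0.rpow_const (Or.inl (by positivity))
  have c2 : ContinuousAt (fun t : ℝ => Real.exp (-a/(4*t))) t := by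
    apply Real.continuous_exp.continuousAt.comp
    exact continuousAt_const.div (by fun_prop) (by positivity)
  have c3 : ContinuousAt (fun t : ℝ => (-(n:ℝ)/2)/t + a/(4*t^2)) t := by
    apply ContinuousAt.add
    · exact continuousAt_const.div continuousAt_id ht'.ne'
    · exact continuousAt_const.div (by fun_prop) (by positivity)
  exact (c1.mul c2).mul c3

lemma continuousOn_hmaj (n : ℕ) (r : ℝ) : ContinuousOn (hmaj n r) (Ioi (0:ℝ)) := by
  intro t ht
  have ht' : (0:ℝ) < t := ht
  apply ContinuousAt.continuousWithinAt
  have c1 : ContinuousAt (fun t : ℝ => t ^ (-(n:ℝ)/2 - 2)) t :=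
    continuousAt_id.rpow_const (Or.inl ht'.ne')
  have c2 : ContinuousAt (fun t : ℝ => Real.exp (-r^2/(32*t))) t := by
    apply Real.continuous_exp.continuousAt.comp
    exact continuousAt_const.div (by fun_prop) (by positivity)
  exact c1.mul c2

lemma pair_bound (n : ℕ) {r a b : ℝ} (hr : 0 < r) (ha : r^2/4 ≤ a) (hb : r^2/4 ≤ b)
    {v u : ℝ} (hv : 0 < v) (hvu : v ≤ u) :
    |(Wf n a u - Wf n b u) - (Wf n a v - Wf n b v)|
      ≤ ∫ t in Ioc v u, ((((n:ℝ)+6)/8) * (4*π) ^ (-(n:ℝ)/2) * |a-b|) * hmaj n r t := by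
  set M : ℝ := (((n:ℝ)+6)/8) * (4*π) ^ (-(n:ℝ)/2) * |a-b| with hM
  have hsub : uIcc v u ⊆ Ioi (0:ℝ) := by
    rw [uIcc_of_le hvu]
    exact fun t htm => lt_of_lt_of_le hv htm.1
  have hFder : ∀ t ∈ uIcc v u, HasDerivAt (fun t => Wf n a t - Wf n b t)
      (Wd n a t - Wd n b t) t := fun t htm =>
    (hasDerivAt_Wf n a (hsub htm)).sub (hasDerivAt_Wf n b (hsub htm))
  have hF'int : IntervalIntegrable (fun t => Wd n a t - Wd n b t) volume v u :=
    (((continuousOn_Wd n a).mono hsub).sub ((continuousOn_Wd n b).mono hsub)).intervalIntegrable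
  have hgint : IntervalIntegrable (fun t => M * hmaj n r t) volume v u :=
    (continuousOn_const.mul ((continuousOn_hmaj n r).mono hsub)).intervalIntegrable
  have hFTC : ∫ t in v..u, (Wd n a t - Wd n b t)
      = (Wf n a u - Wf n b u) - (Wf n a v - Wf n b v) :=
    intervalIntegral.integral_eq_sub_of_hasDerivAt hFder hF'int
  have hptbd : ∀ᵐ t ∂(volume.restrict (Set.uIoc v u)), ‖Wd n a t - Wd n b t‖ ≤ M * hmaj n r t := by
    apply (ae_restrict_iff' measurableSet_uIoc).mpr
    apply ae_of_all
    intro t htm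
    have ht : 0 < t := by
      rw [uIoc_of_le hvu] at htm
      exact lt_trans hv htm.1
    rw [Real.norm_eq_abs]
    calc |Wd n a t - Wd n b t|
        ≤ (4*π*t) ^ (-(n:ℝ)/2) * Real.exp (-r^2/(32*t)) * (((n:ℝ)+6)/(8*t^2)) * |a-b| :=
          abs_Wd_sub_le n ht hr.le ha hb
      _ = M * hmaj n r t := by rw [bound_eq_hmaj n r ht, hM]; ring
  have := intervalIntegral.norm_integral_le_abs_of_norm_le hptbd hgint
  rw [hFTC, Real.norm_eq_abs] at this
  apply this.trans
  rw [intervalIntegral.integral_of_le hvu]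
  apply le_of_eq
  apply abs_of_nonneg
  apply setIntegral_nonneg measurableSet_Ioc
  intro t htm
  have ht : 0 < t := lt_trans hv htm.1
  have : 0 ≤ hmaj n r t := by
    unfold hmaj
    positivity
  have hM0 : 0 ≤ M := by positivity
  positivity

end

noncomputable section

lemma exp_neg_le_fact_div (k : ℕ) {x : ℝ} (hx : 0 < x) :
    Real.exp (-x) ≤ ((Nat.factorial k) : ℝ) / x ^ k := by
  have h1 : x ^ k / ((Nat.factorial k) : ℝ) ≤ Real.exp x := by
    calc x ^ k / ((Nat.factorial k) : ℝ)
        ≤ ∑ i ∈ Finset.range (k+1), x ^ i / (Nat.factorial i : ℝ) := by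
          apply Finset.single_le_sum (f := fun i => x ^ i / (Nat.factorial i : ℝ))
          · intro i _
            positivity
          · exact Finset.self_mem_range_succ k
      _ ≤ Real.exp x := Real.sum_le_exp_of_nonneg hx.le _
  have h2 : x ^ k ≤ Real.exp x * ((Nat.factorial k) : ℝ) :=
    (div_le_iff₀ (by positivity)).mp h1
  rw [Real.exp_neg, le_div_iff₀ (pow_pos hx k), inv_mul_le_iff₀ (Real.exp_pos x)]
  exact h2

lemma hmaj_nonneg (n : ℕ) (r : ℝ) {t : ℝ} (ht : 0 < t) : 0 ≤ hmaj n r t := by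
  unfold hmaj; positivity

lemma integrableOn_hmaj (n : ℕ) {r : ℝ} (hr : 0 < r) :
    IntegrableOn (hmaj n r) (Ioi (0:ℝ)) := by
  set α : ℝ := -(n:ℝ)/2 - 2 with hα
  have hn0 : (0:ℝ) ≤ (n:ℝ) := Nat.cast_nonneg n
  have hα1 : α < -1 := by rw [hα]; linarith
  have h1 : IntegrableOn (hmaj n r) (Ioi (1:ℝ)) := by
    have hg : IntegrableOn (fun t : ℝ => t ^ α) (Ioi 1) :=
      integrableOn_Ioi_rpow_of_lt hα1 one_pos
    apply Integrable.mono hg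
    · exact ((continuousOn_hmaj n r).mono
        (Ioi_subset_Ioi zero_le_one)).aestronglyMeasurable measurableSet_Ioi
    · apply (ae_restrict_iff' measurableSet_Ioi).mpr
      apply ae_of_all
      intro t htm
      have ht : (0:ℝ) < t := lt_trans one_pos htm
      rw [Real.norm_eq_abs, Real.norm_eq_abs, abs_of_nonneg (hmaj_nonneg n r ht),
        abs_of_nonneg (Real.rpow_nonneg ht.le α)]
      unfold hmaj
      have he : Real.exp (-r^2/(32*t)) ≤ 1 := by
        apply Real.exp_le_one_iff.mpr
        have : (0:ℝ) ≤ r^2/(32*t) := by positivity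
        rw [neg_div]; linarith
      exact mul_le_of_le_one_right (Real.rpow_nonneg ht.le α) he
  have h2 : IntegrableOn (hmaj n r) (Ioc (0:ℝ) 1) := by
    set C : ℝ := ((Nat.factorial (n+2)) : ℝ) * (32 / r^2) ^ (n+2) with hC
    have hg : IntegrableOn (fun _ : ℝ => C) (Ioc (0:ℝ) 1) :=
      integrableOn_const measure_Ioc_lt_top.ne
    apply Integrable.mono hg
    · exact ((continuousOn_hmaj n r).mono
        (fun z hz => hz.1)).aestronglyMeasurable measurableSet_Ioc
    · apply (ae_restrict_iff' measurableSet_Ioc).mpr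
      apply ae_of_all
      intro t htm
      have ht : (0:ℝ) < t := htm.1
      have hC0 : 0 ≤ C := by positivity
      rw [Real.norm_eq_abs, Real.norm_eq_abs, abs_of_nonneg (hmaj_nonneg n r ht),
        abs_of_nonneg hC0]
      have hx : (0:ℝ) < r^2/(32*t) := by positivity
      have hkey := exp_neg_le_fact_div (n+2) hx
      have hxk : ((Nat.factorial (n+2)) : ℝ) / (r^2/(32*t)) ^ (n+2) = C * t ^ (n+2) := by
        rw [hC]
        rw [div_pow, div_pow, mul_pow]
        field_simp
      have hexp : Real.exp (-r^2/(32*t)) ≤ C * t ^ (n+2) := by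
        rw [neg_div]
        exact hkey.trans (le_of_eq hxk)
      calc hmaj n r t = t ^ α * Real.exp (-r^2/(32*t)) := rfl
        _ ≤ t ^ α * (C * t ^ (n+2)) :=
            mul_le_mul_of_nonneg_left hexp (Real.rpow_nonneg ht.le α)
        _ = C * (t ^ (((n:ℝ)+2) + α)) := by
            rw [Real.rpow_add ht, ← Real.rpow_natCast t (n+2)]
            push_cast
            ring
        _ ≤ C * 1 := by
            apply mul_le_mul_of_nonneg_left _ hC0
            apply Real.rpow_le_one ht.le htm.2
            rw [hα]; linarith
        _ = C := mul_one C
  have hun : Ioc (0:ℝ) 1 ∪ Ioi 1 = Ioi 0 := Ioc_union_Ioi_eq_Ioi zero_le_one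
  rw [← hun]
  exact h2.union h1

lemma hmaj_scale (n : ℕ) {r : ℝ} (hr : 0 < r) :
    ∫ t in Ioi (0:ℝ), hmaj n r t = r ^ (-(n:ℝ)-2) * ∫ s in Ioi (0:ℝ), hmaj n 1 s := by
  set α : ℝ := -(n:ℝ)/2 - 2 with hα
  have hb : (0:ℝ) < (r^2)⁻¹ := by positivity
  have key := integral_comp_mul_left_Ioi (hmaj n 1) 0 hb
  rw [mul_zero] at key
  have hpt : EqOn (hmaj n r) (fun t => r ^ (2*α) * hmaj n 1 ((r^2)⁻¹ * t)) (Ioi (0:ℝ)) := by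
    intro t htm
    have ht : (0:ℝ) < t := htm
    show hmaj n r t = r ^ (2*α) * hmaj n 1 ((r^2)⁻¹ * t)
    unfold hmaj
    have e0 : ((r^2)⁻¹ : ℝ) = r ^ ((-2):ℝ) := by
      have h22 : ((2:ℝ)) = ((2:ℕ):ℝ) := by norm_num
      rw [show ((-2):ℝ) = -(2:ℝ) from rfl, Real.rpow_neg hr.le, h22, Real.rpow_natCast]
    have e1 : ((r^2)⁻¹ * t) ^ α = r ^ ((-2)*α) * t ^ α := by
      rw [Real.mul_rpow (by positivity) ht.le, e0, ← Real.rpow_mul hr.le]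
    have e2 : -(1:ℝ)^2/(32*((r^2)⁻¹ * t)) = -r^2/(32*t) := by
      rw [one_pow]
      field_simp
    rw [e1, e2]
    have e3 : r ^ (2*α) * r ^ ((-2)*α) = 1 := by
      rw [← Real.rpow_add hr]
      norm_num
    calc t ^ α * Real.exp (-r^2/(32*t))
        = (r ^ (2*α) * r ^ ((-2)*α)) * t ^ α * Real.exp (-r^2/(32*t)) := by rw [e3]; ring
      _ = r ^ (2*α) * (r ^ ((-2)*α) * t ^ α * Real.exp (-r^2/(32*t))) := by ring
  rw [setIntegral_congr_fun measurableSet_Ioi hpt]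
  rw [integral_const_mul, key, smul_eq_mul, inv_inv]
  have : r ^ (2*α) * r^2 = r ^ (-(n:ℝ)-2) := by
    rw [← Real.rpow_natCast r 2, ← Real.rpow_add hr, hα]
    norm_num
    ring_nf
  rw [← mul_assoc, this]

end


section SumLemma
open Real

lemma tsum_abs_sub_le (g F : ℝ → ℝ) (hgint : IntegrableOn g (Ioi 0))
    (hg0 : ∀ t ∈ Ioi (0:ℝ), 0 ≤ g t) (t : ℕ → ℝ) (hsa : StrictAnti t) (hp : ∀ j, 0 < t j)
    (hpair : ∀ j, |F (t j) - F (t (j+1))| ≤ ∫ s in Ioc (t (j+1)) (t j), g s) :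
    ∑' j, ENNReal.ofReal (|F (t j) - F (t (j+1))|) ≤ ENNReal.ofReal (∫ s in Ioi 0, g s) := by
  have hmeas : ∀ j : ℕ, MeasurableSet (Ioc (t (j+1)) (t j)) := fun j => measurableSet_Ioc
  have hdisj : Pairwise (Function.onFun Disjoint fun j => Ioc (t (j+1)) (t j)) := by
    have key : ∀ i j : ℕ, i < j → Disjoint (Ioc (t (i+1)) (t i)) (Ioc (t (j+1)) (t j)) := by
      intro i j hij
      apply Set.disjoint_left.mpr
      intro z hz1 hz2
      have h1 : t j ≤ t (i+1) := hsa.antitone (by omega : i+1 ≤ j)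
      exact absurd (hz2.2.trans h1) (not_le.mpr hz1.1)
    intro i j hij
    rcases hij.lt_or_gt with h | h
    · exact key i j h
    · exact (key j i h).symm
  have hsub : (⋃ j, Ioc (t (j+1)) (t j)) ⊆ Ioi (0:ℝ) :=
    iUnion_subset fun j z hz => lt_trans (hp (j+1)) hz.1
  have hnn : (0:ℝ → ℝ) ≤ᵐ[volume.restrict (Ioi (0:ℝ))] g :=
    (ae_restrict_iff' measurableSet_Ioi).mpr (ae_of_all _ hg0)
  calc ∑' j, ENNReal.ofReal (|F (t j) - F (t (j+1))|)
      ≤ ∑' j, ∫⁻ s in Ioc (t (j+1)) (t j), ENNReal.ofReal (g s) := by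
        apply ENNReal.tsum_le_tsum
        intro j
        have hint : IntegrableOn g (Ioc (t (j+1)) (t j)) :=
          hgint.mono_set (fun z hz => lt_trans (hp (j+1)) hz.1)
        have hnn' : (0:ℝ → ℝ) ≤ᵐ[volume.restrict (Ioc (t (j+1)) (t j))] g :=
          (ae_restrict_iff' (hmeas j)).mpr
            (ae_of_all _ (fun z hz => hg0 z (lt_trans (hp (j+1)) hz.1)))
        calc ENNReal.ofReal (|F (t j) - F (t (j+1))|)
            ≤ ENNReal.ofReal (∫ s in Ioc (t (j+1)) (t j), g s) :=
              ENNReal.ofReal_le_ofReal (hpair j)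
          _ = ∫⁻ s in Ioc (t (j+1)) (t j), ENNReal.ofReal (g s) :=
              ofReal_integral_eq_lintegral_ofReal hint hnn'
    _ = ∫⁻ s in ⋃ j, Ioc (t (j+1)) (t j), ENNReal.ofReal (g s) :=
        (lintegral_iUnion hmeas hdisj _).symm
    _ ≤ ∫⁻ s in Ioi (0:ℝ), ENNReal.ofReal (g s) := lintegral_mono_set hsub
    _ = ENNReal.ofReal (∫ s in Ioi 0, g s) :=
        (ofReal_integral_eq_lintegral_ofReal hgint hnn).symm

end SumLemma
end Helpers

/-- for the classical heat kernel and `ρ > 2`, the variation seminorm of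
the kernel difference satisfies
`‖W_t(x,y) - W_t(x₁,y)‖_{E_ρ} ≤ C |x - x₁| / |x - y|^{n+1}` whenever
`|x - y| ≥ 2 |x - x₁|`, with `C` depending only on `n` and `ρ`. -/
theorem eVar_heatKernel_diff (n : ℕ) (hn : 1 ≤ n) (ρ : ℝ) (hρ : 2 < ρ) :
    ∃ C > 0, ∀ x x₁ y : EuclideanSpace ℝ (Fin n), 2 * ‖x - x₁‖ ≤ ‖x - y‖ →
      eVar ρ (fun t => heatKernel n t x y - heatKernel n t x₁ y)
        ≤ ENNReal.ofReal (C * ‖x - x₁‖ / ‖x - y‖ ^ (n + 1)) := by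
  have hρ0 : (0:ℝ) < ρ := by linarith
  set K₁ : ℝ := ∫ s in Ioi (0:ℝ), hmaj n 1 s with hK₁
  have hK₁0 : 0 ≤ K₁ := setIntegral_nonneg measurableSet_Ioi (fun s hs => hmaj_nonneg n 1 hs)
  set coeff : ℝ := (((n:ℝ)+6)/8) * (4*Real.pi) ^ (-(n:ℝ)/2) with hcoeff
  have hcoeff0 : 0 ≤ coeff := by positivity
  refine ⟨1 + (5/2) * coeff * K₁, by positivity, ?_⟩
  intro x x₁ y hxy
  have hd0 : (0:ℝ) ≤ ‖x - x₁‖ := norm_nonneg _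
  rcases eq_or_lt_of_le (norm_nonneg (x-y)) with hr0 | hr0
  · -- degenerate case ‖x - y‖ = 0
    have hdz : ‖x - x₁‖ = 0 := le_antisymm (by linarith) hd0
    have hxx : x = x₁ := sub_eq_zero.mp (norm_eq_zero.mp hdz)
    have hF : (fun t => heatKernel n t x y - heatKernel n t x₁ y) = fun _ => (0:ℝ) := by
      funext t; rw [hxx]; ring
    rw [hF]
    have hz : eVar ρ (fun _ => (0:ℝ)) = 0 := by
      unfold eVar
      apply le_antisymm _ (zero_le')
      apply iSup_le
      intro ts
      simp only [sub_self, abs_zero, Real.zero_rpow hρ0.ne', ENNReal.ofReal_zero, tsum_zero]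
      rw [ENNReal.zero_rpow_of_pos (by positivity : (0:ℝ) < 1/ρ)]
    rw [hz]
    exact zero_le'
  · -- main case 0 < ‖x - y‖
    suffices h : eVar ρ (fun t => Wf n (‖x - y‖^2) t - Wf n (‖x₁ - y‖^2) t)
        ≤ ENNReal.ofReal ((1 + (5/2) * coeff * K₁) * ‖x - x₁‖ / ‖x - y‖ ^ (n + 1)) by
      exact h
    set r : ℝ := ‖x - y‖ with hrdef
    set d : ℝ := ‖x - x₁‖ with hddef
    set a : ℝ := ‖x - y‖^2 with hadef
    set b : ℝ := ‖x₁ - y‖^2 with hbdef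
    have hb2 : r/2 ≤ ‖x₁ - y‖ := by
      have htri : ‖x - y‖ ≤ ‖x - x₁‖ + ‖x₁ - y‖ := by
        have h := norm_add_le (x - x₁) (x₁ - y)
        rwa [sub_add_sub_cancel] at h
      rw [← hrdef, ← hddef] at htri
      linarith
    have hb4 : r^2/4 ≤ b := by
      rw [hbdef]
      nlinarith [hb2, norm_nonneg (x₁ - y), hr0]
    have ha4 : r^2/4 ≤ a := by
      rw [hadef, ← hrdef]
      nlinarith [hr0]
    have habd : |a - b| ≤ (5/2)*r*d := by
      have h1 : |‖x - y‖ - ‖x₁ - y‖| ≤ d := by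
        have h := abs_norm_sub_norm_le (x - y) (x₁ - y)
        rwa [sub_sub_sub_cancel_right, ← hddef] at h
      have h2 : ‖x₁ - y‖ ≤ d + r := by
        have h := norm_add_le (x₁ - x) (x - y)
        rw [sub_add_sub_cancel] at h
        calc ‖x₁ - y‖ ≤ ‖x₁ - x‖ + ‖x - y‖ := h
          _ = d + r := by rw [norm_sub_rev x₁ x, ← hddef, ← hrdef]
      have h3 : a - b = (‖x - y‖ - ‖x₁ - y‖) * (‖x - y‖ + ‖x₁ - y‖) := by
        rw [hadef, hbdef]; ring
      rw [h3, abs_mul, abs_of_nonneg (by positivity : (0:ℝ) ≤ ‖x - y‖ + ‖x₁ - y‖)]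
      have h4 : ‖x - y‖ + ‖x₁ - y‖ ≤ (5/2)*r := by
        rw [← hrdef]
        linarith [h2, hxy]
      nlinarith [abs_nonneg (‖x - y‖ - ‖x₁ - y‖), h1, h4, hd0, hr0]
    -- integrability and nonnegativity of the majorant
    have hgint : IntegrableOn (fun s => (coeff * |a - b|) * hmaj n r s) (Ioi (0:ℝ)) :=
      (integrableOn_hmaj n hr0).const_mul _
    have hg0 : ∀ s ∈ Ioi (0:ℝ), 0 ≤ (coeff * |a - b|) * hmaj n r s := by
      intro s hs
      exact mul_nonneg (mul_nonneg hcoeff0 (abs_nonneg _)) (hmaj_nonneg n r hs)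
    -- the value of the integral
    have hval : ∫ s in Ioi (0:ℝ), (coeff * |a - b|) * hmaj n r s
        = (coeff * |a - b|) * (r ^ (-(n:ℝ)-2) * K₁) := by
      rw [integral_const_mul, hmaj_scale n hr0, hK₁]
    -- the final real inequality
    have hrn : (0:ℝ) < r^(n+1) := pow_pos hr0 _
    have hrr : r ^ (-(n:ℝ)-2) = (r^(n+1) * r)⁻¹ := by
      rw [show -(n:ℝ)-2 = -((n:ℝ)+2) by ring, Real.rpow_neg hr0.le]
      congr 1
      rw [show (n:ℝ)+2 = ((n+2 : ℕ):ℝ) by push_cast; ring, Real.rpow_natCast]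
      ring
    have key : coeff * |a - b| * K₁ ≤ (1 + (5/2)*coeff*K₁) * d * r := by
      nlinarith [mul_le_mul_of_nonneg_right (mul_le_mul_of_nonneg_left habd hcoeff0) hK₁0,
        mul_nonneg hd0 hr0.le, mul_nonneg (mul_nonneg hcoeff0 hK₁0) (mul_nonneg hd0 hr0.le),
        abs_nonneg (a - b), hcoeff0, hK₁0]
    have hfinal : (coeff * |a - b|) * (r ^ (-(n:ℝ)-2) * K₁)
        ≤ (1 + (5/2) * coeff * K₁) * d / r ^ (n+1) := by
      rw [hrr]
      have h5 : coeff * |a - b| * ((r^(n+1)*r)⁻¹ * K₁)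
          = (coeff * |a - b| * K₁) / (r^(n+1)*r) := by ring
      have h6 : (1 + (5/2)*coeff*K₁) * d / r^(n+1)
          = ((1 + (5/2)*coeff*K₁) * d * r) / (r^(n+1)*r) := by
        rw [div_eq_div_iff hrn.ne' (by positivity : (0:ℝ) < r^(n+1)*r).ne']
        ring
      rw [h5, h6]
      gcongr
    -- now bound the variation
    unfold eVar
    apply iSup_le
    rintro ⟨ts, hsa, hp, -⟩
    have hpair : ∀ j : ℕ, |(Wf n a (ts j) - Wf n b (ts j)) - (Wf n a (ts (j+1)) - Wf n b (ts (j+1)))|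
        ≤ ∫ s in Ioc (ts (j+1)) (ts j), (coeff * |a - b|) * hmaj n r s := by
      intro j
      have hpb := pair_bound n hr0 ha4 hb4 (hp (j+1)) (hsa (Nat.lt_succ_self j)).le
      calc |(Wf n a (ts j) - Wf n b (ts j)) - (Wf n a (ts (j+1)) - Wf n b (ts (j+1)))|
          ≤ ∫ s in Ioc (ts (j+1)) (ts j),
              ((((n:ℝ)+6)/8) * (4*Real.pi) ^ (-(n:ℝ)/2) * |a-b|) * hmaj n r s := hpb
        _ = ∫ s in Ioc (ts (j+1)) (ts j), (coeff * |a - b|) * hmaj n r s := by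
            rw [hcoeff]
    calc (∑' j, ENNReal.ofReal (|(fun t => Wf n a t - Wf n b t) (ts j)
            - (fun t => Wf n a t - Wf n b t) (ts (j+1))| ^ ρ)) ^ (1/ρ)
        = (∑' j, (ENNReal.ofReal (|(Wf n a (ts j) - Wf n b (ts j))
            - (Wf n a (ts (j+1)) - Wf n b (ts (j+1)))|)) ^ ρ) ^ (1/ρ) := by
          congr 1
          apply tsum_congr
          intro j
          rw [ENNReal.ofReal_rpow_of_nonneg (abs_nonneg _) hρ0.le]
      _ ≤ ∑' j, ENNReal.ofReal (|(Wf n a (ts j) - Wf n b (ts j))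
            - (Wf n a (ts (j+1)) - Wf n b (ts (j+1)))|) := tsum_rpow_le_tsum _ (by linarith)
      _ ≤ ENNReal.ofReal (∫ s in Ioi 0, (coeff * |a - b|) * hmaj n r s) :=
          tsum_abs_sub_le _ (fun t => Wf n a t - Wf n b t) hgint hg0 ts hsa hp hpair
      _ ≤ ENNReal.ofReal ((1 + (5/2) * coeff * K₁) * d / r ^ (n+1)) := by
          rw [hval]
          exact ENNReal.ofReal_le_ofReal hfinal

end
end
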